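/- Let G = (V,E) be a finite undirected unweighted graph, let v ∈ V, let A, B ⊆ V with v ∉ B, let ε > 0 be a real number, let u ∈ B satisfy δ(v,u) = δ(v,B), and let Q be a fixed shortest v–u path in G. Suppose that δ(v,B,x) is finite for every vertex x ≠ v lying on Q, and let h be the maximum of δ(v,B,x) over these vertices x. Then there exists a set S of vertices of Q, with v ∉ S and |S| ≤ ⌊log h / log(1+ε)⌋ + 1, such that for every vertex x ∈ V \ {v}: Ball^x(v,A,B,ε) ⊆ Ball(v,A,B) ∪ ⋃_{x'∈S} Ball^{x'}(v,A,B). -/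

import Mathlib

open scoped ENNReal Classical

/-- The graph `G` with vertex `x` "failed": edges incident to `x` are removed,
so that walks in `G.avoid x` are exactly walks of `G` avoiding `x`
(for endpoints different from `x`). -/
def SimpleGraph.avoid {V : Type*} (G : SimpleGraph V) (x : V) : SimpleGraph V where
  Adj a b := G.Adj a b ∧ a ≠ x ∧ b ≠ x
  symm := ⟨fun _ _ h => ⟨h.1.symm, h.2.2, h.2.1⟩⟩
  loopless := ⟨fun a h => G.loopless.irrefl a h.1⟩

/-- `δ(a,b,x)` : the distance (in `ℕ∞`) between `a` and `b` in `G − x`,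
with the convention that it is `∞` if `a = x` or `b = x`. -/
noncomputable def davoid {V : Type*} (G : SimpleGraph V) (a b x : V) : ℕ∞ :=
  if a = x ∨ b = x then ⊤ else (G.avoid x).edist a b

/-- `δ(v,B)` : distance from `v` to the set `B`. -/
noncomputable def dset {V : Type*} (G : SimpleGraph V) (v : V) (B : Set V) : ℕ∞ :=
  ⨅ w ∈ B, G.edist v w

/-- `δ(v,B,x)` : distance from `v` to the set `B` in `G − x`. -/
noncomputable def dsetAvoid {V : Type*} (G : SimpleGraph V) (v : V) (B : Set V) (x : V) : ℕ∞ :=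
  ⨅ w ∈ B, davoid G v w x

/-- `Ball(v,A,B) = {w ∈ A : δ(v,w) < δ(v,B)}`. -/
def ball {V : Type*} (G : SimpleGraph V) (v : V) (A B : Set V) : Set V :=
  {w ∈ A | G.edist v w < dset G v B}

/-- `Ball^x(v,A,B) = {w ∈ A : δ(v,w,x) < δ(v,B,x)}`. -/
def ballAvoid {V : Type*} (G : SimpleGraph V) (v : V) (A B : Set V) (x : V) : Set V :=
  {w ∈ A | davoid G v w x < dsetAvoid G v B x}

/-- `Ball^x(v,A,B,ε) = {w ∈ A : (1+ε)·δ(v,w,x) < δ(v,B,x)}`. -/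
def ballTrunc {V : Type*} (G : SimpleGraph V) (v : V) (A B : Set V) (x : V) (ε : ℝ) : Set V :=
  {w ∈ A | ENNReal.ofReal (1 + ε) * (davoid G v w x : ℝ≥0∞) < (dsetAvoid G v B x : ℝ≥0∞)}

/-- `C^x(w,A,B,ε) = {v ∈ V : (1+ε)·δ(v,w,x) < δ(v,B,x)}`. -/
def clusterTrunc {V : Type*} (G : SimpleGraph V) (w : V) (B : Set V) (x : V) (ε : ℝ) : Set V :=
  {v | ENNReal.ofReal (1 + ε) * (davoid G v w x : ℝ≥0∞) < (dsetAvoid G v B x : ℝ≥0∞)}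


section helpers
open SimpleGraph Walk List
variable {V : Type*} {G : SimpleGraph V} {a b x y v : V}

lemma avoid_le : G.avoid x ≤ G := fun _ _ h => h.1

lemma davoid_le_of_walk (P : G.Walk a b) (hx : x ∉ P.support) :
    davoid G a b x ≤ P.length := by
  have ha : a ≠ x := fun h => hx (h ▸ P.start_mem_support)
  have hb : b ≠ x := fun h => hx (h ▸ P.end_mem_support)
  rw [davoid, if_neg (by simp [ha, hb])]
  have hP : ∀ e ∈ P.edges, e ∈ (G.avoid x).edgeSet := by
    intro e he
    induction e using Sym2.ind with
    | _ c d =>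
      refine ⟨P.adj_of_mem_edges he, ?_, ?_⟩
      · exact fun h => hx (h ▸ SimpleGraph.Walk.fst_mem_support_of_mem_edges P he)
      · exact fun h => hx (h ▸ SimpleGraph.Walk.snd_mem_support_of_mem_edges P he)
  calc (G.avoid x).edist a b ≤ (P.transfer _ hP).length := SimpleGraph.edist_le _
  _ = P.length := by rw [SimpleGraph.Walk.length_transfer]

lemma avoid_not_mem_support (W : (G.avoid x).Walk a b) (ha : a ≠ x) : x ∉ W.support := by
  induction W with
  | nil => simpa using fun h => ha h.symm
  | cons h p ih =>
    rw [SimpleGraph.Walk.support_cons, List.mem_cons]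
    rintro (h1 | h2)
    · exact ha h1.symm
    · exact ih h.2.2 h2

lemma exists_walk_davoid (h : davoid G a b x ≠ ⊤) :
    ∃ P : G.Walk a b, x ∉ P.support ∧ (P.length : ℕ∞) = davoid G a b x := by
  rw [davoid] at h ⊢
  split_ifs at h ⊢ with hc
  · exact absurd rfl h
  obtain ⟨P, hP⟩ := SimpleGraph.exists_walk_of_edist_ne_top h
  have hsub : ∀ e ∈ P.edges, e ∈ G.edgeSet := fun e he => SimpleGraph.edgeSet_mono avoid_le (P.edges_subset_edgeSet he)
  refine ⟨P.transfer G hsub, ?_, by rw [SimpleGraph.Walk.length_transfer]; exact_mod_cast hP⟩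
  rw [SimpleGraph.Walk.support_transfer]
  push_neg at hc
  exact avoid_not_mem_support P hc.1

lemma edist_le_davoid : G.edist a b ≤ davoid G a b x := by
  rw [davoid]
  split_ifs with hc
  · exact le_top
  exact SimpleGraph.edist_anti avoid_le

lemma dset_le_dsetAvoid {B : Set V} : dset G v B ≤ dsetAvoid G v B x :=
  iInf₂_mono fun w _ => edist_le_davoid

lemma dsetAvoid_le_davoid {B : Set V} (hb : b ∈ B) : dsetAvoid G v B x ≤ davoid G v b x :=
  iInf₂_le b hb

end helpers

section walkidx
open SimpleGraph Walk List
variable {V : Type*} [DecidableEq V] {G : SimpleGraph V} {a b x y : V}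


variable {V : Type*} [DecidableEq V] {G : SimpleGraph V} {a b x y : V}

lemma length_takeUntil_eq (p : G.Walk a b) (h : y ∈ p.support) :
    (p.takeUntil y h).length = p.support.idxOf y := by
  induction p with
  | @nil c =>
    have hy : y = c := by simpa using h
    subst hy
    have h0 : (Walk.nil.takeUntil y h).length = 0 :=
      Nat.le_zero.mp (Walk.length_takeUntil_le _ h)
    simp [h0]
  | @cons c d e r p ih =>
    by_cases hc : c = y
    · subst hc
      simp [Walk.takeUntil]
    · have h' : y ∈ p.support := by
        rcases (by simpa using h) with h1 | h2
        · exact absurd h1.symm hc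
        · exact h2
      rw [Walk.support_cons, List.idxOf_cons_ne _ hc]
      simp only [Walk.takeUntil, dif_neg hc, Walk.length_cons]
      rw [ih h']

lemma support_dropUntil_eq (p : G.Walk a b) (h : y ∈ p.support) :
    (p.dropUntil y h).support = p.support.drop (p.support.idxOf y) := by
  induction p with
  | @nil c =>
    have hy : y = c := by simpa using h
    subst hy
    have h0 : (Walk.nil.dropUntil y h).length = 0 :=
      Nat.le_zero.mp (Walk.length_dropUntil_le _ h)
    rw [Walk.nil_iff_eq_nil.mp (Walk.length_eq_zero_iff.mp h0)]
    simp
  | @cons c d e r p ih =>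
    by_cases hc : c = y
    · subst hc
      simp [Walk.dropUntil]
    · have h' : y ∈ p.support := by
        rcases (by simpa using h) with h1 | h2
        · exact absurd h1.symm hc
        · exact h2
      rw [Walk.support_cons, List.idxOf_cons_ne _ hc]
      simp only [Walk.dropUntil, dif_neg hc, List.drop_succ_cons]
      rw [ih h']

lemma length_take_add_drop (p : G.Walk a b) (h : y ∈ p.support) :
    (p.takeUntil y h).length + (p.dropUntil y h).length = p.length := by
  rw [← Walk.length_append, Walk.take_spec]

end walkidx

section listidx
open List
variable {α : Type*} [DecidableEq α] {x y : α} {l : List α}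



lemma mem_drop_of_indexOf_le (hy : y ∈ l) (h : l.idxOf x ≤ l.idxOf y) :
    y ∈ l.drop (l.idxOf x) := by
  have hylt : l.idxOf y < l.length := List.idxOf_lt_length_iff.mpr hy
  have h2 : (l.drop (l.idxOf x))[l.idxOf y - l.idxOf x]'(by
      rw [length_drop]; omega) = y := by
    have heq : l.idxOf x + (l.idxOf y - l.idxOf x) = l.idxOf y := by omega
    rw [← List.getElem_drop' (xs := l) (by omega)]
    have := getElem_idxOf hylt
    simp_rw [heq]
    exact this
  exact h2 ▸ List.getElem_mem _

lemma not_mem_drop_of_indexOf_lt (hnd : l.Nodup) (hx : x ∈ l)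
    (h : l.idxOf x < l.idxOf y) : x ∉ l.drop (l.idxOf y) := by
  intro hmem
  obtain ⟨i, hi, hgi⟩ := List.mem_iff_getElem.mp hmem
  rw [← List.getElem_drop' (xs := l) (by simp at hi; omega)] at hgi
  have hxlt : l.idxOf x < l.length := List.idxOf_lt_length_iff.mpr hx
  have h1 : l[l.idxOf x] = x := getElem_idxOf hxlt
  have heq := (hnd.getElem_inj_iff).mp (hgi.trans h1.symm)
  omega

lemma eq_of_indexOf_eq (hx : x ∈ l) (hy : y ∈ l)
    (h : l.idxOf x = l.idxOf y) : x = y := by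
  have hxlt : l.idxOf x < l.length := List.idxOf_lt_length_iff.mpr hx
  have h1 : l[l.idxOf x] = x := getElem_idxOf hxlt
  have h2 : l[l.idxOf y]'(h ▸ hxlt) = y := getElem_idxOf _
  rw [← h1, ← h2]
  congr 1

lemma indexOf_le_of_getLast (hnd : l.Nodup) (hne : l ≠ [])
    (hy : y ∈ l) : l.idxOf y ≤ l.idxOf (l.getLast hne) := by
  have hll : l.length - 1 < l.length := by
    cases l; · exact absurd rfl hne
    · simp
  have h1 : l[l.length - 1] = l.getLast hne := (List.getLast_eq_getElem hne).symm
  have hlm : l.getLast hne ∈ l := List.getLast_mem hne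
  have h2 : l[l.idxOf (l.getLast hne)]'(List.idxOf_lt_length_iff.mpr hlm) = l.getLast hne :=
    getElem_idxOf _
  have h3 := (hnd.getElem_inj_iff).mp (h2.trans h1.symm)
  have h4 := List.idxOf_lt_length_iff.mpr hy
  omega

end listidx

section greedy
open Finset


lemma greedy_cover {α : Type*} [DecidableEq α] (T : Finset α) (d pos : α → ℕ)
    (ε : ℝ) (hε : 0 < ε) (h : ℕ)
    (hd1 : ∀ y ∈ T, 1 ≤ d y) (hdh : ∀ y ∈ T, d y ≤ h)
    (u : α) (hu : u ∈ T) (hupos : ∀ y ∈ T, pos y ≤ pos u) :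
    ∃ S : Finset α, S ⊆ T ∧ (S.card : ℝ) ≤ (⌊Real.log h / Real.log (1 + ε)⌋ : ℝ) + 1 ∧
      ∀ x ∈ T, ∃ y ∈ S, pos x ≤ pos y ∧ (d x : ℝ) ≤ (1 + ε) * d y := by
  have h1ε : (1:ℝ) < 1 + ε := by linarith
  have hh1 : 1 ≤ h := le_trans (hd1 u hu) (hdh u hu)
  set r : ℝ := Real.log h / Real.log (1 + ε) with hr
  have hr0 : 0 ≤ r := div_nonneg (Real.log_nonneg (by exact_mod_cast hh1)) (Real.log_nonneg h1ε.le)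
  set K : ℕ := ⌊r⌋.toNat with hK
  have hKr : (K : ℝ) = ⌊r⌋ := by
    rw [hK]; exact_mod_cast Int.toNat_of_nonneg (Int.floor_nonneg.mpr hr0)
  -- candidate set
  classical
  set cand : α → Finset α := fun prev => T.filter (fun y => (1 + ε) * d prev < (d y : ℝ)) with hcand
  -- greedy step
  have step_ex : ∀ prev : α, (cand prev).Nonempty →
      ∃ y ∈ cand prev, ∀ z ∈ cand prev, pos z ≤ pos y := fun prev hne =>
    Finset.exists_max_image (cand prev) pos hne
  set step : α → α := fun prev => if hne : (cand prev).Nonempty then (step_ex prev hne).choose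
    else prev with hstep
  set f : ℕ → α := fun k => Nat.rec u (fun _ prev => step prev) k with hf
  have hf0 : f 0 = u := rfl
  have hfs : ∀ k, f (k+1) = step (f k) := fun k => rfl
  have hfT : ∀ k, f k ∈ T := by
    intro k
    induction k with
    | zero => exact hu
    | succ n ih =>
      rw [hfs, hstep]
      dsimp only
      split_ifs with hne
      · exact (Finset.mem_filter.mp (step_ex (f n) hne).choose_spec.1).1
      · exact ih
  -- growth
  have hgrow : ∀ k, (∀ j < k, (cand (f j)).Nonempty) → ((1+ε)^k : ℝ) ≤ d (f k) := by
    intro k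
    induction k with
    | zero => simpa using by exact_mod_cast hd1 u hu
    | succ n ih =>
      intro hj
      have hne : (cand (f n)).Nonempty := hj n (Nat.lt_succ_self n)
      have hlt : (1 + ε) * d (f n) < (d ((step_ex (f n) hne).choose) : ℝ) :=
        (Finset.mem_filter.mp (step_ex (f n) hne).choose_spec.1).2
      have hstepval : f (n+1) = (step_ex (f n) hne).choose := by
        rw [hfs, hstep]; exact dif_pos hne
      have ihn : ((1+ε)^n : ℝ) ≤ d (f n) := ih (fun j hjn => hj j (Nat.lt_succ_of_lt hjn))
      rw [hstepval]
      calc ((1+ε)^(n+1) : ℝ) = (1+ε) * (1+ε)^n := by ring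
      _ ≤ (1+ε) * d (f n) := by nlinarith
      _ ≤ _ := hlt.le
  -- stabilization by step K
  have hstab : ∃ k ≤ K, ¬ (cand (f k)).Nonempty := by
    by_contra hcon
    push_neg at hcon
    have hall : ∀ j < K + 1, (cand (f j)).Nonempty := fun j hj => hcon j (by omega)
    have hge := hgrow (K+1) hall
    have hle : (d (f (K+1)) : ℝ) ≤ h := by
      have := hdh (f (K+1)) (hfT (K+1)); exact_mod_cast this
    have hgt : (h : ℝ) < (1+ε)^(K+1) := by
      have hKgt : r < (K : ℝ) + 1 := by rw [hKr]; exact Int.lt_floor_add_one r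
      have : Real.log h < (K + 1) * Real.log (1+ε) := by
        rw [hr] at hKgt
        have hlog : 0 < Real.log (1+ε) := Real.log_pos h1ε
        calc Real.log h = (Real.log h / Real.log (1+ε)) * Real.log (1+ε) := by
              field_simp
        _ < (K+1) * Real.log (1+ε) := by
              apply mul_lt_mul_of_pos_right _ hlog
              push_cast
              exact hKgt
      have hlog2 : Real.log ((1:ℝ)+ε) * (K+1 : ℕ) = ((K:ℝ)+1) * Real.log (1+ε) := by
        push_cast; ring
      have hpow : Real.log (((1:ℝ)+ε)^(K+1)) = ((K:ℝ)+1) * Real.log (1+ε) := by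
        rw [Real.log_pow]; push_cast; ring
      have : Real.log (h:ℝ) < Real.log (((1:ℝ)+ε)^(K+1)) := by rw [hpow]; exact this
      exact (Real.log_lt_log_iff (by exact_mod_cast Nat.lt_of_lt_of_le Nat.zero_lt_one hh1)
        (by positivity)).mp this
    linarith
  obtain ⟨k₀, hk₀K, hk₀⟩ := hstab
  refine ⟨(Finset.range (k₀+1)).image f, ?_, ?_, ?_⟩
  · intro y hy
    obtain ⟨k, _, rfl⟩ := Finset.mem_image.mp hy
    exact hfT k
  · have hc1 : ((Finset.range (k₀+1)).image f).card ≤ k₀ + 1 := by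
      refine le_trans Finset.card_image_le ?_
      simp
    have hc2 : (((Finset.range (k₀+1)).image f).card : ℝ) ≤ (K : ℝ) + 1 := by
      have : ((Finset.range (k₀+1)).image f).card ≤ K + 1 := by omega
      exact_mod_cast this
    rw [hKr] at hc2
    exact_mod_cast hc2
  · intro x hx
    -- coverage
    by_cases h0 : (d x : ℝ) ≤ (1+ε) * d (f 0)
    · exact ⟨u, Finset.mem_image.mpr ⟨0, Finset.mem_range.mpr (by omega), hf0⟩,
        hupos x hx, by rwa [hf0] at h0⟩
    · push_neg at h0
      set J : Finset ℕ := (Finset.range (k₀+1)).filter (fun k => (1+ε) * d (f k) < (d x : ℝ))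
        with hJ
      have hJne : J.Nonempty := ⟨0, by simp [hJ, h0]⟩
      set k := J.max' hJne with hk
      have hkJ : k ∈ J := J.max'_mem hJne
      rw [hJ, Finset.mem_filter, Finset.mem_range] at hkJ
      have hkne : (cand (f k)).Nonempty := ⟨x, Finset.mem_filter.mpr ⟨hx, hkJ.2⟩⟩
      have hkk₀ : k < k₀ := by
        rcases Nat.lt_or_ge k k₀ with h' | h'
        · exact h'
        · exfalso
          have hkk : k = k₀ := by omega
          exact hk₀ (hkk ▸ hkne)
      have hspec := (step_ex (f k) hkne).choose_spec
      have hstepval : f (k+1) = (step_ex (f k) hkne).choose := by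
        rw [hfs, hstep]; exact dif_pos hkne
      refine ⟨f (k+1), Finset.mem_image.mpr ⟨k+1, Finset.mem_range.mpr (by omega), rfl⟩, ?_, ?_⟩
      · rw [hstepval]
        exact hspec.2 x (Finset.mem_filter.mpr ⟨hx, hkJ.2⟩)
      · by_contra hcon
        push_neg at hcon
        have : k + 1 ∈ J := by
          rw [hJ, Finset.mem_filter, Finset.mem_range]
          exact ⟨by omega, hcon⟩
        have := Finset.le_max' J _ this
        omega

end greedy

/-- let `u ∈ B` be nearest to `v ∉ B`, `Q` a fixed shortest `v`–`u`
path, and suppose `δ(v,B,x)` is finite for all `x ≠ v` on `Q` with maximum `h`.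
Then there is a set `S` of vertices of `Q`, `v ∉ S`,
`|S| ≤ ⌊log h / log(1+ε)⌋ + 1`, such that for every `x ≠ v`,
`Ball^x(v,A,B,ε) ⊆ Ball(v,A,B) ∪ ⋃_{x'∈S} Ball^{x'}(v,A,B)`. -/
theorem stmt11 {V : Type*} [Fintype V] [DecidableEq V] (G : SimpleGraph V) (v : V)
    (A B : Set V) (hvB : v ∉ B) (ε : ℝ) (hε : 0 < ε)
    (u : V) (hu : u ∈ B) (hnear : G.edist v u = dset G v B)
    (Q : G.Walk v u) (hQ : Q.IsPath) (hQlen : (Q.length : ℕ∞) = G.edist v u)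
    (h : ℕ)
    (hub : ∀ x ∈ Q.support, x ≠ v → dsetAvoid G v B x ≤ (h : ℕ∞))
    (hattain : ∃ x ∈ Q.support, x ≠ v ∧ dsetAvoid G v B x = (h : ℕ∞)) :
    ∃ S : Finset V, (∀ s ∈ S, s ∈ Q.support) ∧ v ∉ S ∧
      (S.card : ℝ) ≤ (⌊Real.log h / Real.log (1 + ε)⌋ : ℝ) + 1 ∧
      ∀ x : V, x ≠ v → ballTrunc G v A B x ε ⊆
        ball G v A B ∪ ⋃ x' ∈ (S : Set V), ballAvoid G v A B x' := by
  classical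
  set l := Q.support with hl
  have hnd : l.Nodup := hQ.support_nodup
  have hvu : v ≠ u := fun hvu => hvB (hvu ▸ hu)
  set L := Q.length with hL
  have hLpos : 0 < L := by
    rcases Nat.eq_zero_or_pos L with h0 | h1
    · exact absurd (SimpleGraph.Walk.eq_of_length_eq_zero h0) hvu
    · exact h1
  have hdset : dset G v B = (L : ℕ∞) := by rw [← hnear, ← hQlen]
  have hllen : l.length = L + 1 := Q.length_support
  -- the finset T of vertices of Q other than v
  set T : Finset V := l.toFinset.erase v with hT
  have hmemT : ∀ {y : V}, y ∈ T ↔ y ≠ v ∧ y ∈ l := by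
    intro y; rw [hT, Finset.mem_erase, List.mem_toFinset]
  -- d values
  set d : V → ℕ := fun y => (dsetAvoid G v B y).toNat with hd
  have hdy : ∀ y ∈ T, (d y : ℕ∞) = dsetAvoid G v B y := by
    intro y hy
    rw [hd]
    exact ENat.coe_toNat (fun htop =>
      by simpa [htop] using hub y (hmemT.mp hy).2 (hmemT.mp hy).1)
  have hd1 : ∀ y ∈ T, 1 ≤ d y := by
    intro y hy
    have h1 : (L : ℕ∞) ≤ (d y : ℕ∞) := by
      rw [hdy y hy, ← hdset]; exact dset_le_dsetAvoid
    have : (L : ℕ) ≤ d y := by exact_mod_cast h1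
    omega
  have hdh : ∀ y ∈ T, d y ≤ h := by
    intro y hy
    have h1 : (d y : ℕ∞) ≤ (h : ℕ∞) := by
      rw [hdy y hy]; exact hub y (hmemT.mp hy).2 (hmemT.mp hy).1
    exact_mod_cast h1
  -- position function
  set pos : V → ℕ := fun y => l.idxOf y with hpos
  have huT : u ∈ T := hmemT.mpr ⟨hvu.symm, Q.end_mem_support⟩
  have hlne : l ≠ [] := by
    intro hnil
    have := Q.start_mem_support
    rw [← hl, hnil] at this
    simp at this
  have hupos : ∀ y ∈ T, pos y ≤ pos u := by
    intro y hy
    have hgl : l.getLast hlne = u := Q.getLast_support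
    have := indexOf_le_of_getLast hnd hlne (hmemT.mp hy).2
    rwa [hgl] at this
  obtain ⟨S, hST, hcard, hcover⟩ := greedy_cover T d pos ε hε h hd1 hdh u huT hupos
  have hSQ : ∀ s ∈ S, s ∈ l := fun s hs => (hmemT.mp (hST hs)).2
  refine ⟨S, hSQ, fun hvS => (hmemT.mp (hST hvS)).1 rfl, hcard, ?_⟩
  intro x hxv w hw
  obtain ⟨hwA, hlt⟩ := hw
  have hQx : x ∉ Q.support → dsetAvoid G v B x ≤ (L : ℕ∞) := fun hxQ =>
    le_trans (dsetAvoid_le_davoid hu) (by simpa using davoid_le_of_walk Q hxQ)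
  have hBx_ne : dsetAvoid G v B x ≠ ⊤ := by
    by_cases hxQ : x ∈ Q.support
    · exact fun htop => by simpa [htop] using hub x hxQ hxv
    · exact fun htop => by simpa [htop] using hQx hxQ
  have hofReal_pos : (0 : ℝ≥0∞) < ENNReal.ofReal (1 + ε) := by
    rw [ENNReal.ofReal_pos]; linarith
  have hofReal_one : (1 : ℝ≥0∞) ≤ ENNReal.ofReal (1 + ε) := by
    rw [← ENNReal.ofReal_one]
    exact ENNReal.ofReal_le_ofReal (by linarith)
  have hvw_ne : davoid G v w x ≠ ⊤ := by
    intro htop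
    rw [htop] at hlt
    simp only [ENat.toENNReal_top, ENNReal.mul_top hofReal_pos.ne'] at hlt
    exact absurd hlt (by simp)
  obtain ⟨P, hxP, hPlen⟩ := exists_walk_davoid hvw_ne
  set m := P.length with hm
  have hm_lt : (m : ℕ∞) < dsetAvoid G v B x := by
    have h1 : ((m : ℕ∞) : ℝ≥0∞) < (dsetAvoid G v B x : ℝ≥0∞) := by
      calc ((m : ℕ∞) : ℝ≥0∞) = 1 * ((m : ℕ∞) : ℝ≥0∞) := (one_mul _).symm
      _ ≤ ENNReal.ofReal (1 + ε) * ((m : ℕ∞) : ℝ≥0∞) := by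
          exact mul_le_mul_left hofReal_one _
      _ = ENNReal.ofReal (1 + ε) * (davoid G v w x : ℝ≥0∞) := by rw [hPlen]
      _ < _ := hlt
    exact_mod_cast h1
  have hEvw_le : G.edist v w ≤ (m : ℕ∞) := SimpleGraph.edist_le P
  by_cases hxQ : x ∈ Q.support
  case neg =>
    -- x not on Q : w ∈ ball
    left
    refine ⟨hwA, ?_⟩
    rw [hdset]
    calc G.edist v w ≤ (m : ℕ∞) := hEvw_le
    _ < dsetAvoid G v B x := hm_lt
    _ ≤ (L : ℕ∞) := hQx hxQ
  case pos =>
    have hxT : x ∈ T := hmemT.mpr ⟨hxv, hxQ⟩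
    have hdx_eq : dsetAvoid G v B x = (d x : ℕ∞) := (hdy x hxT).symm
    by_cases hcase : ∃ y, y ∈ P.support ∧ y ∈ l ∧ l.idxOf x < l.idxOf y
    · -- case (a) : w ∈ ball
      obtain ⟨y, hyP, hyQ, hidx⟩ := hcase
      left
      refine ⟨hwA, ?_⟩
      set j' := l.idxOf y with hj'
      have hj'lt : j' < L + 1 := hllen ▸ List.idxOf_lt_length_iff.mpr hyQ
      set a := (P.takeUntil y hyP).length with ha
      set bb := (P.dropUntil y hyP).length with hbb
      have hab : a + bb = m := length_take_add_drop P hyP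
      have hQt_len : (Q.takeUntil y hyQ).length = j' := length_takeUntil_eq Q hyQ
      have hQd_len : (Q.dropUntil y hyQ).length = L - j' := by
        have := length_take_add_drop Q hyQ
        omega
      have hxQd : x ∉ (Q.dropUntil y hyQ).support := by
        rw [support_dropUntil_eq]
        exact not_mem_drop_of_indexOf_lt hnd hxQ hidx
      have hxPt : x ∉ (P.takeUntil y hyP).support :=
        fun hmem => hxP (SimpleGraph.Walk.support_takeUntil_subset P hyP hmem)
      have hxW : x ∉ ((P.takeUntil y hyP).append (Q.dropUntil y hyQ)).support := by
        rw [SimpleGraph.Walk.support_append]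
        rw [List.mem_append]
        rintro (h1 | h2)
        · exact hxPt h1
        · exact hxQd (List.mem_of_mem_tail h2)
      have hdx_le : dsetAvoid G v B x ≤ ((a + (L - j') : ℕ) : ℕ∞) := by
        refine le_trans (dsetAvoid_le_davoid hu) ?_
        have := davoid_le_of_walk _ hxW
        rwa [SimpleGraph.Walk.length_append, hQd_len] at this
      -- numbers
      have hm_lt_nat : m < a + (L - j') := by
        have := hm_lt.trans_le hdx_le
        exact_mod_cast this
      have hbb_lt : bb < L - j' := by omega
      have hEvy : G.edist v y ≤ (j' : ℕ∞) := by
        have := SimpleGraph.edist_le (Q.takeUntil y hyQ)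
        rwa [hQt_len] at this
      have hEyw : G.edist y w ≤ (bb : ℕ∞) := SimpleGraph.edist_le (P.dropUntil y hyP)
      rw [hdset]
      calc G.edist v w ≤ G.edist v y + G.edist y w := SimpleGraph.edist_triangle
      _ ≤ (j' : ℕ∞) + (bb : ℕ∞) := add_le_add hEvy hEyw
      _ = ((j' + bb : ℕ) : ℕ∞) := by push_cast; rfl
      _ < (L : ℕ∞) := by
          rw [Nat.cast_lt]
          omega
    · -- case (b) : w ∈ ballAvoid x'' for some x'' ∈ S
      push_neg at hcase
      obtain ⟨x'', hx''S, hx''pos, hx''d⟩ := hcover x hxT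
      have hx''Q : x'' ∈ l := hSQ x'' hx''S
      have hx''P : x'' ∉ P.support := by
        intro hmem
        have hle := hcase x'' hmem hx''Q
        have heq : l.idxOf x = l.idxOf x'' := le_antisymm hx''pos hle
        exact hxP ((eq_of_indexOf_eq hxQ hx''Q heq) ▸ hmem)
      have h1 : davoid G v w x'' ≤ (m : ℕ∞) := davoid_le_of_walk P hx''P
      -- m < d x''
      have hmx : (m : ℝ) * (1 + ε) < (d x : ℝ) := by
        have hfin1 : (davoid G v w x : ℝ≥0∞) ≠ ⊤ := fun hc =>
          hvw_ne (ENat.toENNReal_strictMono.injective (by rw [hc, ENat.toENNReal_top]))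
        have h2 : ENNReal.ofReal (1 + ε) * (davoid G v w x : ℝ≥0∞) <
            ((d x : ℕ∞) : ℝ≥0∞) := by
          rw [← hdx_eq]; exact hlt
        have h3 := ENNReal.toReal_lt_toReal (by
            exact ENNReal.mul_ne_top ENNReal.ofReal_ne_top hfin1) (by simp) |>.mpr h2
        rw [ENNReal.toReal_mul, ENNReal.toReal_ofReal (by linarith)] at h3
        rw [← hPlen] at h3
        simpa [mul_comm] using h3
      have hm_lt_dx'' : m < d x'' := by
        have hR : (m : ℝ) < d x'' := by
          have hεm : (m : ℝ) ≤ (m : ℝ) * (1 + ε) := by nlinarith [Nat.cast_nonneg (α := ℝ) m]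
          have h4 : (m : ℝ) * (1 + ε) < (1 + ε) * (d x'') := lt_of_lt_of_le hmx hx''d
          nlinarith [Nat.cast_nonneg (α := ℝ) (d x'')]
        exact_mod_cast hR
      right
      rw [Set.mem_iUnion₂]
      refine ⟨x'', hx''S, hwA, ?_⟩
      rw [← hdy x'' (hST hx''S)]
      calc davoid G v w x'' ≤ (m : ℕ∞) := h1
      _ < (d x'' : ℕ∞) := by rw [Nat.cast_lt]; exact hm_lt_dx''
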